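/- For all sign sequences ξ, η : ℤ → {−1,+1} and all (n,m) ∈ ℤ², set H(n,m) := ⌈(X_n + Y_m)/2⌉. Then H(n,m) − H(n,m−1) ∈ {−1, 1} if the horizontal edge {(n,m),(n+1,m)} is present in G(ξ,η) (i.e. η(m) = (−1)^n), and H(n,m) = H(n,m−1) otherwise; likewise H(n,m) − H(n−1,m) ∈ {−1, 1} if the vertical edge {(n,m),(n,m+1)} is present in G(ξ,η) (i.e. ξ(n) = (−1)^m), and H(n,m) = H(n−1,m) otherwise. (Thus H is the natural height function of the corner percolation configuration: it changes by exactly ±1 across each present edge and is constant across each absent edge.) -/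

import Mathlib

/-- The corner percolation graph `G(ξ,η)` on `ℤ²`: the vertical edge
`{(n,m),(n,m+1)}` is present iff `ξ n = (-1)^m`, and the horizontal edge
`{(n,m),(n+1,m)}` is present iff `η m = (-1)^n`. -/
def cornerGraph (ξ η : ℤ → ℤ) : SimpleGraph (ℤ × ℤ) where
  Adj u v :=
    (u.2 = v.2 ∧ ((v.1 = u.1 + 1 ∧ η u.2 = (u.1.negOnePow : ℤ)) ∨
        (u.1 = v.1 + 1 ∧ η v.2 = (v.1.negOnePow : ℤ)))) ∨
    (u.1 = v.1 ∧ ((v.2 = u.2 + 1 ∧ ξ u.1 = (u.2.negOnePow : ℤ)) ∨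
        (u.2 = v.2 + 1 ∧ ξ v.1 = (v.2.negOnePow : ℤ))))
  symm := by
    constructor
    rintro u v (⟨h, hd⟩ | ⟨h, hd⟩)
    · exact Or.inl ⟨h.symm, hd.symm⟩
    · exact Or.inr ⟨h.symm, hd.symm⟩
  loopless := by
    constructor
    rintro u (⟨-, ⟨h, -⟩ | ⟨h, -⟩⟩ | ⟨-, ⟨h, -⟩ | ⟨h, -⟩⟩) <;> omega

/-- For the walks `X`, `Y` associated to the sign sequences `ξ`, `η`, the
height function `H(n,m) = ⌈(X n + Y m)/2⌉` changes by exactly `±1` across each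
present edge of the corner percolation configuration `G(ξ,η)` and is constant
across each absent edge. -/

lemma ceil_half (a : ℤ) : ⌈((a : ℚ)) / 2⌉ = (a + 1) / 2 := by
  rw [Int.ceil_eq_iff]
  set b := (a + 1) / 2 with hb
  have h : 2 * b = a + 1 ∨ 2 * b = a := by omega
  constructor
  · rw [lt_div_iff₀ (by norm_num)]
    exact_mod_cast show ((b : ℤ) - 1) * 2 < a by omega
  · rw [div_le_iff₀ (by norm_num)]
    exact_mod_cast show a ≤ b * 2 by omega

lemma walk_step (X ξ : ℤ → ℤ) (hξ : ∀ n, ξ n = 1 ∨ ξ n = -1)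
    (hX : ∀ n : ℤ, X n - X (n - 1) = ((n + 1).negOnePow : ℤ) * ξ n) (n : ℤ) :
    X n - X (n - 1) = 1 ∨ X n - X (n - 1) = -1 := by
  rw [hX n]
  rcases Int.even_or_odd (n + 1) with h | h
  · rw [Int.negOnePow_even _ h]
    rcases hξ n with h' | h' <;> simp [h']
  · rw [Int.negOnePow_odd _ h]
    rcases hξ n with h' | h' <;> simp [h']

lemma walk_parity (X ξ : ℤ → ℤ) (hξ : ∀ n, ξ n = 1 ∨ ξ n = -1) (hX0 : X 0 = 0)
    (hX : ∀ n : ℤ, X n - X (n - 1) = ((n + 1).negOnePow : ℤ) * ξ n) (n : ℤ) :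
    (X n + n) % 2 = 0 := by
  induction n using Int.induction_on with
  | zero => simp [hX0]
  | succ k hk =>
    have h := walk_step X ξ hξ hX (k + 1)
    rw [show (k : ℤ) + 1 - 1 = k by ring] at h
    omega
  | pred k hk =>
    have h := walk_step X ξ hξ hX (-k)
    omega

lemma negOnePow_parity (n : ℤ) :
    ((n.negOnePow : ℤ) = 1 ∧ n % 2 = 0) ∨ ((n.negOnePow : ℤ) = -1 ∧ n % 2 = 1) := by
  rcases Int.even_or_odd n with h | h
  · exact Or.inl ⟨by rw [Int.negOnePow_even _ h]; rfl, Int.even_iff.mp h⟩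
  · exact Or.inr ⟨by rw [Int.negOnePow_odd _ h]; rfl, Int.odd_iff.mp h⟩


theorem statement_0 (ξ η X Y : ℤ → ℤ)
    (hξ : ∀ n, ξ n = 1 ∨ ξ n = -1) (hη : ∀ m, η m = 1 ∨ η m = -1)
    (hX0 : X 0 = 0) (hY0 : Y 0 = 0)
    (hX : ∀ n : ℤ, X n - X (n - 1) = ((n + 1).negOnePow : ℤ) * ξ n)
    (hY : ∀ m : ℤ, Y m - Y (m - 1) = ((m + 1).negOnePow : ℤ) * η m)
    (H : ℤ → ℤ → ℤ) (hH : ∀ n m : ℤ, H n m = ⌈((X n + Y m : ℤ) : ℚ) / 2⌉)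
    (n m : ℤ) :
    ((η m = (n.negOnePow : ℤ) →
        (H n m - H n (m - 1) = -1 ∨ H n m - H n (m - 1) = 1)) ∧
     (η m ≠ (n.negOnePow : ℤ) → H n m = H n (m - 1))) ∧
    ((ξ n = (m.negOnePow : ℤ) →
        (H n m - H (n - 1) m = -1 ∨ H n m - H (n - 1) m = 1)) ∧
     (ξ n ≠ (m.negOnePow : ℤ) → H n m = H (n - 1) m)) := by
  have hH' : ∀ n m : ℤ, H n m = (X n + Y m + 1) / 2 := fun n m => by
    rw [hH n m, ceil_half]
  have hXp1 := walk_parity X ξ hξ hX0 hX n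
  have hXp2 := walk_parity X ξ hξ hX0 hX (n - 1)
  have hYp1 := walk_parity Y η hη hY0 hY m
  have hYp2 := walk_parity Y η hη hY0 hY (m - 1)
  have hXn := hX n
  have hYm := hY m
  rw [Int.negOnePow_succ] at hXn hYm
  simp only [Units.val_neg] at hXn hYm
  rw [hH' n m, hH' n (m - 1), hH' (n - 1) m]
  rcases negOnePow_parity n with ⟨e1, p1⟩ | ⟨e1, p1⟩ <;>
    rcases negOnePow_parity m with ⟨e2, p2⟩ | ⟨e2, p2⟩ <;>
    rw [e1] at hXn ⊢ <;> rw [e2] at hYm ⊢ <;>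
    rcases hξ n with h1 | h1 <;> rcases hη m with h2 | h2 <;>
    rw [h1] at hXn ⊢ <;> rw [h2] at hYm ⊢ <;>
    norm_num at hXn hYm ⊢ <;> omega
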